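/- Determinism: the combined small-step relation ⇒ = ⇀ ∪ →read ∪ →store ∪ →merge is deterministic on well-formed configurations: if (C, h, e) is well-formed, (C, h, e) ⇒ (C1, h1, e1) and (C, h, e) ⇒ (C2, h2, e2), then (C1, h1, e1) = (C2, h2, e2). -/

import Mathlib

namespace Memo

/-! ### Terms over a program signature -/

/-- Terms over operation symbols `Op`, constructors `Con` and variables `V`. -/
inductive Tm (Op Con V : Type) : Type
  | var : V → Tm Op Con V
  | op  : Op → List (Tm Op Con V) → Tm Op Con V
  | con : Con → List (Tm Op Con V) → Tm Op Con V

namespace Tm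
variable {Op Con V : Type}

/-- Substitution. -/
def subst (σ : V → Tm Op Con V) : Tm Op Con V → Tm Op Con V
  | .var x => σ x
  | .op f ts => .op f (ts.attach.map fun t => subst σ t.1)
  | .con c ts => .con c (ts.attach.map fun t => subst σ t.1)
decreasing_by
  all_goals simp_wf
  all_goals (have := List.sizeOf_lt_of_mem t.2; omega)

/-- The size `|t|` of a term (number of symbols). -/
def size : Tm Op Con V → ℕ
  | .var _ => 1
  | .op _ ts => 1 + (ts.attach.map fun t => size t.1).sum
  | .con _ ts => 1 + (ts.attach.map fun t => size t.1).sum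
decreasing_by
  all_goals simp_wf
  all_goals (have := List.sizeOf_lt_of_mem t.2; omega)

/-- Number of occurrences of the variable `x` in a term. -/
def varCount [DecidableEq V] (x : V) : Tm Op Con V → ℕ
  | .var y => if y = x then 1 else 0
  | .op _ ts => (ts.attach.map fun t => varCount x t.1).sum
  | .con _ ts => (ts.attach.map fun t => varCount x t.1).sum
decreasing_by
  all_goals simp_wf
  all_goals (have := List.sizeOf_lt_of_mem t.2; omega)

end Tm

/-- Values: ground constructor terms. -/
inductive IsValue {Op Con V : Type} : Tm Op Con V → Prop
  | con {c : Con} {ts} : (∀ t ∈ ts, IsValue t) → IsValue (.con c ts)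

/-- Ground terms: terms without variables. -/
inductive Ground {Op Con V : Type} : Tm Op Con V → Prop
  | op {f : Op} {ts} : (∀ t ∈ ts, Ground t) → Ground (.op f ts)
  | con {c : Con} {ts} : (∀ t ∈ ts, Ground t) → Ground (.con c ts)

/-- Patterns: terms built from constructors and variables only. -/
inductive IsPattern {Op Con V : Type} : Tm Op Con V → Prop
  | var (x : V) : IsPattern (.var x)
  | con {c : Con} {ts} : (∀ t ∈ ts, IsPattern t) → IsPattern (.con c ts)

/-- The variable `x` occurs in the given term. -/
inductive VarIn {Op Con V : Type} (x : V) : Tm Op Con V → Prop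
  | var : VarIn x (.var x)
  | op {f : Op} {ts t} : t ∈ ts → VarIn x t → VarIn x (.op f ts)
  | con {c : Con} {ts t} : t ∈ ts → VarIn x t → VarIn x (.con c ts)

/-! ### Programs -/

/-- A rewrite rule `f(p₁,…,pₖ) → r`. -/
structure Rule (Op Con V : Type) where
  lhsOp : Op
  lhsArgs : List (Tm Op Con V)
  rhs : Tm Op Con V

/-- A program: a finite set (list) of rewrite rules. -/
structure Prog (Op Con V : Type) where
  rules : List (Rule Op Con V)

/-- Well-formed rule: left-hand side arguments are patterns and all variables of the
right-hand side occur in the left-hand side. -/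
def WFRule {Op Con V : Type} (r : Rule Op Con V) : Prop :=
  (∀ p ∈ r.lhsArgs, IsPattern p) ∧
  (∀ x, VarIn x r.rhs → ∃ p ∈ r.lhsArgs, VarIn x p)

/-- Left-linearity: every variable occurs at most once in the left-hand side. -/
def LeftLinear {Op Con V : Type} [DecidableEq V] (r : Rule Op Con V) : Prop :=
  ∀ x : V, (r.lhsArgs.map (Tm.varCount x)).sum ≤ 1

/-- Non-ambiguity: no two rules have overlapping left-hand sides. -/
def NonAmbiguous {Op Con V : Type} (P : Prog Op Con V) : Prop :=
  ∀ r1 ∈ P.rules, ∀ r2 ∈ P.rules, r1.lhsOp = r2.lhsOp →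
    ∀ σ1 σ2 : V → Tm Op Con V,
      r1.lhsArgs.map (Tm.subst σ1) = r2.lhsArgs.map (Tm.subst σ2) → r1 = r2

/-- Orthogonal program: well-formed, left-linear and non-ambiguous. -/
def Orthogonal {Op Con V : Type} [DecidableEq V] (P : Prog Op Con V) : Prop :=
  (∀ r ∈ P.rules, WFRule r ∧ LeftLinear r) ∧ NonAmbiguous P

/-! ### Standard call-by-value big-step semantics (Figure 3) -/

mutual
/-- `Eval P t v`: the term `t` reduces to the value `v`. -/
inductive Eval {Op Con V : Type} (P : Prog Op Con V) : Tm Op Con V → Tm Op Con V → Prop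
  | con {c : Con} {ts vs} : EvalList P ts vs → Eval P (.con c ts) (.con c vs)
  | split {f : Op} {ts vs v} : EvalList P ts vs → Eval P (.op f vs) v →
      Eval P (.op f ts) v
  | apply {f : Op} {vs r σ v} : (∀ u ∈ vs, IsValue u) → r ∈ P.rules → r.lhsOp = f →
      vs = r.lhsArgs.map (Tm.subst σ) → Eval P (Tm.subst σ r.rhs) v →
      Eval P (.op f vs) v

/-- Left-to-right evaluation of a list of terms. -/
inductive EvalList {Op Con V : Type} (P : Prog Op Con V) :
    List (Tm Op Con V) → List (Tm Op Con V) → Prop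
  | nil : EvalList P [] []
  | cons {t v ts vs} : Eval P t v → EvalList P ts vs → EvalList P (t :: ts) (v :: vs)
end

/-! ### Cost-annotated big-step semantics with memoization (Figure 4) -/

/-- A cache: a set of pairs of a function call on values and its result value. -/
abbrev TCache (Op Con V : Type) := Set (Op × List (Tm Op Con V) × Tm Op Con V)

mutual
/-- `MEval P C₀ t m C₁ v`: starting with cache `C₀` the term `t` reduces to the value `v`
with updated cache `C₁` at cost `m` (number of non-tabulated function applications). -/
inductive MEval {Op Con V : Type} (P : Prog Op Con V) :
    TCache Op Con V → Tm Op Con V → ℕ → TCache Op Con V → Tm Op Con V → Prop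
  | con {C0 C1 : TCache Op Con V} {c : Con} {ts m vs} :
      MEvalList P C0 ts m C1 vs →
      MEval P C0 (.con c ts) m C1 (.con c vs)
  | split {C0 C1 C2 : TCache Op Con V} {f : Op} {ts m vs n v} :
      MEvalList P C0 ts m C1 vs →
      MEval P C1 (.op f vs) n C2 v →
      MEval P C0 (.op f ts) (n + m) C2 v
  | read {C : TCache Op Con V} {f : Op} {vs v} :
      (∀ u ∈ vs, IsValue u) → (f, vs, v) ∈ C →
      MEval P C (.op f vs) 0 C v
  | update {C C' : TCache Op Con V} {f : Op} {vs r σ m v} :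
      (∀ u ∈ vs, IsValue u) → (∀ u, (f, vs, u) ∉ C) →
      r ∈ P.rules → r.lhsOp = f → vs = r.lhsArgs.map (Tm.subst σ) →
      MEval P C (Tm.subst σ r.rhs) m C' v →
      MEval P C (.op f vs) (m + 1) (insert (f, vs, v) C') v

/-- Left-to-right evaluation of a list of terms, threading the cache and summing costs. -/
inductive MEvalList {Op Con V : Type} (P : Prog Op Con V) :
    TCache Op Con V → List (Tm Op Con V) → ℕ → TCache Op Con V → List (Tm Op Con V) → Prop
  | nil {C : TCache Op Con V} : MEvalList P C [] 0 C []
  | cons {C0 C1 C2 : TCache Op Con V} {t m v ts n vs} :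
      MEval P C0 t m C1 v → MEvalList P C1 ts n C2 vs →
      MEvalList P C0 (t :: ts) (m + n) C2 (v :: vs)
end

/-! ### Heaps -/

/-- Locations. -/
abbrev Loc := ℕ

/-- A heap: a (partial) map from locations to constructors applied to locations,
i.e. a term graph over the constructors whose nodes are locations. -/
abbrev Heap (Con : Type) := Loc → Option (Con × List Loc)

/-- Domain (set of nodes) of a heap. -/
def heapDom {Con : Type} (h : Heap Con) : Set Loc := {l | h l ≠ none}

/-- A heap is maximally shared if equally labeled locations coincide. -/
def MaxShared {Con : Type} (h : Heap Con) : Prop :=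
  ∀ l1 l2 c ls, h l1 = some (c, ls) → h l2 = some (c, ls) → l1 = l2

/-- All successors of heap nodes are again heap nodes. -/
def HeapClosed {Con : Type} (h : Heap Con) : Prop :=
  ∀ l c ls, h l = some (c, ls) → ∀ l' ∈ ls, l' ∈ heapDom h

/-- `HUnfolds h l v`: the value `v` is stored at location `l`, i.e. `v = [l]_h` is
obtained by unfolding the heap `h` starting from location `l`. -/
inductive HUnfolds {Op Con V : Type} (h : Heap Con) : Loc → Tm Op Con V → Prop
  | mk {l : Loc} {c ls ts} : h l = some (c, ls) → ls.length = ts.length →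
      (∀ (i : ℕ) l' t, ls[i]? = some l' → ts[i]? = some t → HUnfolds h l' t) →
      HUnfolds h l (.con c ts)

/-- `merge(h, c(ℓ⃗)) = (h', ℓ)`: extension of the heap `h` by `c(ℓ⃗)` retaining maximal
sharing; an existing location is reused if possible, otherwise the first fresh location
is used. -/
inductive Merge {Con : Type} (h : Heap Con) (c : Con) (ls : List Loc) : Heap Con → Loc → Prop
  | reuse {l : Loc} : h l = some (c, ls) → Merge h c ls h l
  | fresh {l : Loc} : (∀ l', h l' ≠ some (c, ls)) → h l = none →
      (∀ l' < l, h l' ≠ none) →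
      Merge h c ls (Function.update h l (some (c, ls))) l

/-! ### Expressions, evaluation contexts and configurations -/

/-- Expressions: terms extended with locations and markers `f⟨ℓ⃗⟩{e}`. -/
inductive Expr (Op Con : Type) : Type
  | loc : Loc → Expr Op Con
  | op : Op → List (Expr Op Con) → Expr Op Con
  | con : Con → List (Expr Op Con) → Expr Op Con
  | marked : Op → List Loc → Expr Op Con → Expr Op Con

/-- Value expressions: built from constructors and locations only. -/
inductive IsValExpr {Op Con : Type} : Expr Op Con → Prop
  | loc (l : Loc) : IsValExpr (.loc l)
  | con {c : Con} {es} : (∀ e ∈ es, IsValExpr e) → IsValExpr (.con c es)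

/-- Evaluation contexts: a unique hole, with only locations to the left of the hole. -/
inductive Ctx (Op Con : Type) : Type
  | hole : Ctx Op Con
  | marked : Op → List Loc → Ctx Op Con → Ctx Op Con
  | op : Op → List Loc → Ctx Op Con → List (Expr Op Con) → Ctx Op Con
  | con : Con → List Loc → Ctx Op Con → List (Expr Op Con) → Ctx Op Con

/-- Plugging an expression into the hole of an evaluation context. -/
def Ctx.plug {Op Con : Type} : Ctx Op Con → Expr Op Con → Expr Op Con
  | .hole, e => e
  | .marked f ls E, e => .marked f ls (E.plug e)
  | .op f ls E es, e => .op f (ls.map Expr.loc ++ E.plug e :: es)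
  | .con c ls E es, e => .con c (ls.map Expr.loc ++ E.plug e :: es)

/-- A cache over locations. -/
abbrev HCache (Op : Type) := Set (Op × List Loc × Loc)

/-- Configurations: a cache, a heap and an expression. -/
abbrev Config (Op Con : Type) := HCache Op × Heap Con × Expr Op Con

/-- Instantiation of a term by a substitution mapping variables to locations,
yielding an expression. -/
def instE {Op Con V : Type} (σ : V → Loc) : Tm Op Con V → Expr Op Con
  | .var x => .loc (σ x)
  | .op f ts => .op f (ts.attach.map fun t => instE σ t.1)
  | .con c ts => .con c (ts.attach.map fun t => instE σ t.1)
decreasing_by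
  all_goals simp_wf
  all_goals (have := List.sizeOf_lt_of_mem t.2; omega)

/-- `PMatch h σ p l`: the pattern `p` matches the value stored at location `l` of the
heap `h`, binding the variables of `p` to locations according to `σ`.  This captures
matching via a homomorphism from the canonical tree of `p` into the heap, `σ` being the
induced substitution. -/
inductive PMatch {Op Con V : Type} (h : Heap Con) (σ : V → Loc) : Tm Op Con V → Loc → Prop
  | var {x l} : σ x = l → PMatch h σ (.var x) l
  | con {c : Con} {ps l ls} : h l = some (c, ls) → ps.length = ls.length →
      (∀ (i : ℕ) p l', ps[i]? = some p → ls[i]? = some l' → PMatch h σ p l') →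
      PMatch h σ (.con c ps) l

/-! ### Small-step semantics with memoization and sharing (Figure 6) -/

/-- The (apply) step. -/
inductive ApplyStep {Op Con V : Type} (P : Prog Op Con V) : Config Op Con → Config Op Con → Prop
  | mk {C : HCache Op} {h : Heap Con} {E : Ctx Op Con} {f ls r σ} :
      (∀ l, (f, ls, l) ∉ C) →
      r ∈ P.rules → r.lhsOp = f →
      r.lhsArgs.length = ls.length →
      (∀ (i : ℕ) p l, r.lhsArgs[i]? = some p → ls[i]? = some l → PMatch h σ p l) →
      ApplyStep P (C, h, E.plug (.op f (ls.map Expr.loc)))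
        (C, h, E.plug (.marked f ls (instE σ r.rhs)))

/-- The (read) step. -/
inductive ReadStep {Op Con : Type} : Config Op Con → Config Op Con → Prop
  | mk {C : HCache Op} {h : Heap Con} {E : Ctx Op Con} {f ls l} :
      (f, ls, l) ∈ C →
      ReadStep (C, h, E.plug (.op f (ls.map Expr.loc))) (C, h, E.plug (.loc l))

/-- The (store) step. -/
inductive StoreStep {Op Con : Type} : Config Op Con → Config Op Con → Prop
  | mk {C : HCache Op} {h : Heap Con} {E : Ctx Op Con} {f ls l} :
      StoreStep (C, h, E.plug (.marked f ls (.loc l)))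
        (insert (f, ls, l) C, h, E.plug (.loc l))

/-- The (merge) step. -/
inductive MergeStep {Op Con : Type} : Config Op Con → Config Op Con → Prop
  | mk {C : HCache Op} {h h' : Heap Con} {E : Ctx Op Con} {c ls l} :
      Merge h c ls h' l →
      MergeStep (C, h, E.plug (.con c (ls.map Expr.loc))) (C, h', E.plug (.loc l))

/-- `→sm`: read, store or merge. -/
def SmStep {Op Con : Type} : Config Op Con → Config Op Con → Prop :=
  fun a b => ReadStep a b ∨ StoreStep a b ∨ MergeStep a b

/-- `⇒`: apply, read, store or merge. -/
def Step {Op Con V : Type} (P : Prog Op Con V) : Config Op Con → Config Op Con → Prop :=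
  fun a b => ApplyStep P a b ∨ SmStep a b

/-- n-fold composition of `⇒`. -/
def StepN {Op Con V : Type} (P : Prog Op Con V) : ℕ → Config Op Con → Config Op Con → Prop
  | 0 => fun a b => a = b
  | n + 1 => fun a c => ∃ b, Step P a b ∧ StepN P n b c

/-- `→sm*`. -/
def SmSteps {Op Con : Type} : Config Op Con → Config Op Con → Prop :=
  Relation.ReflTransGen SmStep

/-- `⇛ = →sm* · ⇀ · →sm*`. -/
def MacroStep {Op Con V : Type} (P : Prog Op Con V) : Config Op Con → Config Op Con → Prop :=
  fun a d => ∃ b c, SmSteps a b ∧ ApplyStep P b c ∧ SmSteps c d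

/-- `⇛^m`, the m-fold composition of `⇛`: a reduction containing exactly `m` apply steps. -/
def MacroStepN {Op Con V : Type} (P : Prog Op Con V) : ℕ → Config Op Con → Config Op Con → Prop
  | 0 => fun a b => a = b
  | n + 1 => fun a c => ∃ b, MacroStep P a b ∧ MacroStepN P n b c

/-! ### Well-formed configurations -/

/-- A marker `f⟨ℓ⃗⟩{·}` occurs somewhere in the given expression. -/
inductive MarkedIn {Op Con : Type} (f : Op) (ls : List Loc) : Expr Op Con → Prop
  | here {e} : MarkedIn f ls (.marked f ls e)
  | op {g es e} : e ∈ es → MarkedIn f ls e → MarkedIn f ls (.op g es)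
  | con {c es e} : e ∈ es → MarkedIn f ls e → MarkedIn f ls (.con c es)
  | marked {g ls' e} : MarkedIn f ls e → MarkedIn f ls (.marked g ls' e)

/-- The location `l` occurs in the given expression. -/
inductive LocInExpr {Op Con : Type} (l : Loc) : Expr Op Con → Prop
  | loc : LocInExpr l (.loc l)
  | op {f es e} : e ∈ es → LocInExpr l e → LocInExpr l (.op f es)
  | con {c es e} : e ∈ es → LocInExpr l e → LocInExpr l (.con c es)
  | markedArg {f ls e} : l ∈ ls → LocInExpr l (.marked f ls e)
  | markedBody {f ls e} : LocInExpr l e → LocInExpr l (.marked f ls e)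

/-- Well-formed configurations: the heap is a maximally shared term graph, the cache is a
function compatible with the expression, and there are no dangling locations. -/
def WF {Op Con : Type} (cfg : Config Op Con) : Prop :=
  MaxShared cfg.2.1 ∧ HeapClosed cfg.2.1 ∧
  (∀ f ls l1 l2, (f, ls, l1) ∈ cfg.1 → (f, ls, l2) ∈ cfg.1 → l1 = l2) ∧
  (∀ f ls, MarkedIn f ls cfg.2.2 → ∀ l, (f, ls, l) ∉ cfg.1) ∧
  (∀ f ls l, (f, ls, l) ∈ cfg.1 → l ∈ heapDom cfg.2.1 ∧ ∀ l' ∈ ls, l' ∈ heapDom cfg.2.1) ∧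
  (∀ l, LocInExpr l cfg.2.2 → l ∈ heapDom cfg.2.1)

/-! ### Unfolding of expressions and caches -/

/-- `EUnfolds h e t`: the term `t = [e]_h` is obtained from `e` by following pointers to
the heap and erasing markers. -/
inductive EUnfolds {Op Con V : Type} (h : Heap Con) : Expr Op Con → Tm Op Con V → Prop
  | loc {l t} : HUnfolds h l t → EUnfolds h (.loc l) t
  | op {f : Op} {es ts} : es.length = ts.length →
      (∀ (i : ℕ) e t, es[i]? = some e → ts[i]? = some t → EUnfolds h e t) →
      EUnfolds h (.op f es) (.op f ts)
  | con {c : Con} {es ts} : es.length = ts.length →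
      (∀ (i : ℕ) e t, es[i]? = some e → ts[i]? = some t → EUnfolds h e t) →
      EUnfolds h (.con c es) (.con c ts)
  | marked {f ls e t} : EUnfolds h e t → EUnfolds h (.marked f ls e) t

/-- `[C]_h`: the unfolding of a location cache into a term cache. -/
def cacheUnfold {Op Con : Type} (V : Type) (h : Heap Con) (C : HCache Op) :
    TCache Op Con V :=
  {x | ∃ ls l, (x.1, ls, l) ∈ C ∧ ls.length = x.2.1.length ∧
    (∀ (i : ℕ) l' t, ls[i]? = some l' → x.2.1[i]? = some t → HUnfolds h l' t) ∧
    HUnfolds h l x.2.2}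

/-- An initial configuration: empty cache, maximally shared heap without dangling
locations, and an expression `f(v₁,…,vₖ)` whose arguments are value expressions. -/
def InitialConf {Op Con : Type} (h : Heap Con) (e : Expr Op Con) : Prop :=
  MaxShared h ∧ HeapClosed h ∧ (∀ l, LocInExpr l e → l ∈ heapDom h) ∧
  ∃ (f : Op) (es : List (Expr Op Con)), e = .op f es ∧ ∀ e' ∈ es, IsValExpr e'

/-! ### Sizes and weights -/

/-- The size `|e|` of an expression: every symbol and location counts one. -/
def exprSize {Op Con : Type} : Expr Op Con → ℕ
  | .loc _ => 1
  | .op _ es => 1 + (es.attach.map fun e => exprSize e.1).sum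
  | .con _ es => 1 + (es.attach.map fun e => exprSize e.1).sum
  | .marked _ _ e => 1 + exprSize e
decreasing_by
  all_goals simp_wf
  all_goals (have := List.sizeOf_lt_of_mem e.2; omega)

/-- The weight `‖e‖` of an expression: like the size, but locations count zero. -/
def weight {Op Con : Type} : Expr Op Con → ℕ
  | .loc _ => 0
  | .op _ es => 1 + (es.attach.map fun e => weight e.1).sum
  | .con _ es => 1 + (es.attach.map fun e => weight e.1).sum
  | .marked _ _ e => 1 + weight e
decreasing_by
  all_goals simp_wf
  all_goals (have := List.sizeOf_lt_of_mem e.2; omega)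

/-- `Δ`, the maximal size of a right-hand side of the program. -/
def progDelta {Op Con V : Type} (P : Prog Op Con V) : ℕ :=
  (P.rules.map fun r => r.rhs.size).foldr max 1

/-- The size of a configuration: cardinality of the cache plus number of heap nodes plus
size of the expression. -/
noncomputable def confSize {Op Con : Type} (cfg : Config Op Con) : ℕ :=
  cfg.1.ncard + (heapDom cfg.2.1).ncard + exprSize cfg.2.2

open Classical in
/-- The number of apply steps along a list of configurations. -/
noncomputable def applyCount {Op Con V : Type} (P : Prog Op Con V) :
    List (Config Op Con) → ℕ
  | [] => 0
  | [_] => 0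
  | a :: b :: rest => (if ApplyStep P a b then 1 else 0) + applyCount P (b :: rest)

end Memo

namespace Memo
variable {Op Con V : Type}

lemma subst_var (σ : V → Tm Op Con V) (x : V) : Tm.subst σ (.var x) = σ x := by
  rw [Tm.subst]

lemma subst_op (σ : V → Tm Op Con V) (f : Op) (ts : List (Tm Op Con V)) :
    Tm.subst σ (.op f ts) = .op f (ts.map (Tm.subst σ)) := by
  rw [Tm.subst]; simp

lemma subst_con (σ : V → Tm Op Con V) (cc : Con) (ts : List (Tm Op Con V)) :
    Tm.subst σ (.con cc ts) = .con cc (ts.map (Tm.subst σ)) := by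
  rw [Tm.subst]; simp

lemma varCount_var [DecidableEq V] (x y : V) :
    Tm.varCount x (.var y : Tm Op Con V) = if y = x then 1 else 0 := by
  rw [Tm.varCount]

lemma varCount_op [DecidableEq V] (x : V) (f : Op) (ts : List (Tm Op Con V)) :
    Tm.varCount x (.op f ts) = (ts.map (Tm.varCount x)).sum := by
  rw [Tm.varCount]; simp

lemma varCount_con [DecidableEq V] (x : V) (cc : Con) (ts : List (Tm Op Con V)) :
    Tm.varCount x (.con cc ts) = (ts.map (Tm.varCount x)).sum := by
  rw [Tm.varCount]; simp

lemma instE_var (σ : V → Loc) (x : V) :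
    instE (Op := Op) (Con := Con) σ (.var x) = .loc (σ x) := by
  rw [instE]

lemma instE_op (σ : V → Loc) (f : Op) (ts : List (Tm Op Con V)) :
    instE σ (.op f ts) = .op f (ts.map (instE σ)) := by
  rw [instE]; simp

lemma instE_con (σ : V → Loc) (cc : Con) (ts : List (Tm Op Con V)) :
    instE σ (.con cc ts) = .con cc (ts.map (instE σ)) := by
  rw [instE]; simp

end Memo
namespace Memo
variable {Op Con V : Type}

lemma one_le_varCount [DecidableEq V] {x : V} {t : Tm Op Con V} (h : VarIn x t) :
    1 ≤ Tm.varCount x t := by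
  induction h with
  | var => simp [varCount_var]
  | op hmem _ ih =>
    rw [varCount_op]
    exact le_trans ih (List.single_le_sum (by simp) _ (List.mem_map_of_mem hmem))
  | con hmem _ ih =>
    rw [varCount_con]
    exact le_trans ih (List.single_le_sum (by simp) _ (List.mem_map_of_mem hmem))

lemma not_varIn [DecidableEq V] {x : V} {t : Tm Op Con V} (h : Tm.varCount x t = 0) :
    ¬ VarIn x t := fun hv => by have := one_le_varCount hv; omega

lemma subst_congr : ∀ (n : ℕ) (t : Tm Op Con V), sizeOf t ≤ n →
    ∀ s s' : V → Tm Op Con V, (∀ x, VarIn x t → s x = s' x) →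
    Tm.subst s t = Tm.subst s' t := by
  intro n
  induction n with
  | zero => intro t ht; cases t <;> simp at ht
  | succ n ih =>
    intro t ht s s' hss
    cases t with
    | var x => rw [subst_var, subst_var]; exact hss x .var
    | op f ts =>
      rw [subst_op, subst_op]
      congr 1
      apply List.map_congr_left
      intro u hu
      have h1 := List.sizeOf_lt_of_mem hu
      have h2 : sizeOf (Tm.op f ts) = 1 + sizeOf f + sizeOf ts := by simp
      exact ih u (by omega) s s' (fun x hx => hss x (.op hu hx))
    | con cc ts =>
      rw [subst_con, subst_con]
      congr 1
      apply List.map_congr_left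
      intro u hu
      have h1 := List.sizeOf_lt_of_mem hu
      have h2 : sizeOf (Tm.con cc ts) = 1 + sizeOf cc + sizeOf ts := by simp
      exact ih u (by omega) s s' (fun x hx => hss x (.con hu hx))

lemma instE_congr : ∀ (n : ℕ) (t : Tm Op Con V), sizeOf t ≤ n →
    ∀ s s' : V → Loc, (∀ x, VarIn x t → s x = s' x) →
    instE s t = instE s' t := by
  intro n
  induction n with
  | zero => intro t ht; cases t <;> simp at ht
  | succ n ih =>
    intro t ht s s' hss
    cases t with
    | var x => rw [instE_var, instE_var, hss x .var]
    | op f ts =>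
      rw [instE_op, instE_op]
      congr 1
      apply List.map_congr_left
      intro u hu
      have h1 := List.sizeOf_lt_of_mem hu
      have h2 : sizeOf (Tm.op f ts) = 1 + sizeOf f + sizeOf ts := by simp
      exact ih u (by omega) s s' (fun x hx => hss x (.op hu hx))
    | con cc ts =>
      rw [instE_con, instE_con]
      congr 1
      apply List.map_congr_left
      intro u hu
      have h1 := List.sizeOf_lt_of_mem hu
      have h2 : sizeOf (Tm.con cc ts) = 1 + sizeOf cc + sizeOf ts := by simp
      exact ih u (by omega) s s' (fun x hx => hss x (.con hu hx))

lemma pmatch_var_det {h : Heap Con} {σ τ : V → Loc} :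
    ∀ (n : ℕ) (p : Tm Op Con V), sizeOf p ≤ n → ∀ l,
    PMatch h σ p l → PMatch h τ p l → ∀ x, VarIn x p → σ x = τ x := by
  intro n
  induction n with
  | zero => intro p hp; cases p <;> simp at hp
  | succ n ih =>
    intro p hp l m1 m2 x hx
    cases hx with
    | var => cases m1 with | var h1 => cases m2 with | var h2 => rw [h1, h2]
    | op hmem hx' => cases m1
    | con hmem hx' =>
      rename_i cc ps t
      cases m1 with
      | con hl1 hlen1 hm1 =>
        cases m2 with
        | con hl2 hlen2 hm2 =>
          rename_i ls1 ls2
          rw [hl1] at hl2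
          obtain ⟨rfl⟩ : ls1 = ls2 := by
            injection hl2 with h'; injection h'
          obtain ⟨i, hi, rfl⟩ := List.mem_iff_getElem.mp hmem
          have hps : ps[i]? = some ps[i] := List.getElem?_eq_getElem hi
          have hil : i < ls1.length := by omega
          have hls : ls1[i]? = some ls1[i] := List.getElem?_eq_getElem hil
          have hsz : sizeOf ps[i] ≤ n := by
            have h1 := List.sizeOf_lt_of_mem (List.getElem_mem hi)
            have h2 : sizeOf (Tm.con cc ps) = 1 + sizeOf cc + sizeOf ps := by simp
            omega
          exact ih _ hsz _ (hm1 i _ _ hps hls) (hm2 i _ _ hps hls) x hx'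

end Memo
namespace Memo
variable {Op Con V : Type}

lemma list_sizeOf_append (A B : List (Tm Op Con V)) :
    sizeOf (A ++ B) + 1 = sizeOf A + sizeOf B := by
  induction A with
  | nil => simp; omega
  | cons a t ih => simp_all; omega

lemma joinList [DecidableEq V] {h : Heap Con} :
    ∀ (n : ℕ) (ps qs : List (Tm Op Con V)) (ls : List Loc) (σ τ : V → Loc),
    sizeOf ps + sizeOf qs ≤ n →
    (∀ x : V, (ps.map (Tm.varCount x)).sum ≤ 1) →
    (∀ x : V, (qs.map (Tm.varCount x)).sum ≤ 1) →
    ps.length = ls.length → qs.length = ls.length →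
    (∀ (i : ℕ) p l, ps[i]? = some p → ls[i]? = some l → PMatch h σ p l) →
    (∀ (i : ℕ) q l, qs[i]? = some q → ls[i]? = some l → PMatch h τ q l) →
    ∃ s1 s2 : V → Tm Op Con V, ps.map (Tm.subst s1) = qs.map (Tm.subst s2) := by
  intro n
  induction n with
  | zero => intro ps qs ls σ τ hsz; cases ps <;> simp at hsz
  | succ n ih =>
    intro ps qs ls σ τ hsz hlin1 hlin2 hl1 hl2 hm1 hm2
    match ps, qs, ls with
    | [], qs, ls =>
      have : qs = [] := by
        cases qs with
        | nil => rfl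
        | cons a b => simp at hl1 hl2; omega
      subst this; exact ⟨Tm.var, Tm.var, rfl⟩
    | p :: ps', qs, [] => simp at hl1
    | p :: ps', [], l :: ls' => simp at hl2
    | p :: ps', q :: qs', l :: ls' =>
      have hp : PMatch h σ p l := hm1 0 p l (by simp) (by simp)
      have hq : PMatch h τ q l := hm2 0 q l (by simp) (by simp)
      have hm1' : ∀ (i : ℕ) p' l', ps'[i]? = some p' → ls'[i]? = some l' →
          PMatch h σ p' l' := fun i p' l' h1 h2 => hm1 (i+1) p' l' (by simpa) (by simpa)
      have hm2' : ∀ (i : ℕ) q' l', qs'[i]? = some q' → ls'[i]? = some l' →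
          PMatch h τ q' l' := fun i q' l' h1 h2 => hm2 (i+1) q' l' (by simpa) (by simpa)
      have hlin1' : ∀ x : V, (ps'.map (Tm.varCount x)).sum ≤ 1 := by
        intro x; have := hlin1 x; simp at this ⊢; omega
      have hlin2' : ∀ x : V, (qs'.map (Tm.varCount x)).sum ≤ 1 := by
        intro x; have := hlin2 x; simp at this ⊢; omega
      cases p with
      | var x =>
        obtain ⟨s1, s2, hs⟩ := ih ps' qs' ls' σ τ
          (by simp at hsz ⊢; omega) hlin1' hlin2'
          (by simpa using hl1) (by simpa using hl2) hm1' hm2'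
        refine ⟨fun y => if y = x then Tm.subst s2 q else s1 y, s2, ?_⟩
        simp only [List.map_cons, subst_var, if_pos rfl]
        congr 1
        · rw [← hs]
          apply List.map_congr_left
          intro u hu
          have hnx : ¬ VarIn x u := by
            apply not_varIn
            have h1 := hlin1 x
            simp [varCount_var] at h1
            have h2 : Tm.varCount x u ≤ (ps'.map (Tm.varCount x)).sum :=
              List.single_le_sum (by simp) _ (List.mem_map_of_mem hu)
            omega
          apply subst_congr (sizeOf u) u le_rfl
          intro y hy
          have : y ≠ x := fun he => hnx (he ▸ hy)
          simp [this]
      | op f targs => cases hp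
      | con cc pargs =>
        cases q with
        | var y =>
          obtain ⟨s1, s2, hs⟩ := ih ps' qs' ls' σ τ
            (by simp at hsz ⊢; omega) hlin1' hlin2'
            (by simpa using hl1) (by simpa using hl2) hm1' hm2'
          refine ⟨s1, fun z => if z = y then Tm.subst s1 (Tm.con cc pargs) else s2 z, ?_⟩
          simp only [List.map_cons, subst_var, if_pos rfl]
          congr 1
          · rw [hs]
            apply List.map_congr_left
            intro u hu
            have hnx : ¬ VarIn y u := by
              apply not_varIn
              have h1 := hlin2 y
              simp [varCount_var] at h1
              have h2 : Tm.varCount y u ≤ (qs'.map (Tm.varCount y)).sum :=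
                List.single_le_sum (by simp) _ (List.mem_map_of_mem hu)
              omega
            apply subst_congr (sizeOf u) u le_rfl
            intro z hz
            have : z ≠ y := fun he => hnx (he ▸ hz)
            simp [this]
        | op g qargs => cases hq
        | con dd qargs =>
          cases hp with
          | con hlA hlenA hmA =>
            rename_i lsA
            cases hq with
            | con hlB hlenB hmB =>
              rename_i lsB
              have heq : some ((cc : Con), lsA) = some (dd, lsB) := hlA.symm.trans hlB
              injection heq with heq'
              injection heq' with e1 e2
              subst e1; subst e2
              -- recurse on flattened lists
              have hszA : sizeOf (pargs ++ ps') + sizeOf (qargs ++ qs') ≤ n := by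
                have e1 := list_sizeOf_append pargs ps'
                have e2 := list_sizeOf_append qargs qs'
                simp at hsz
                omega
              have hlinA : ∀ x : V, ((pargs ++ ps').map (Tm.varCount x)).sum ≤ 1 := by
                intro x; have := hlin1 x
                simp [varCount_con] at this ⊢
                omega
              have hlinB : ∀ x : V, ((qargs ++ qs').map (Tm.varCount x)).sum ≤ 1 := by
                intro x; have := hlin2 x
                simp [varCount_con] at this ⊢
                omega
              have hlenA' : (pargs ++ ps').length = (lsA ++ ls').length := by
                simp at hl1 ⊢; omega
              have hlenB' : (qargs ++ qs').length = (lsA ++ ls').length := by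
                simp at hl2 ⊢; omega
              have hmA' : ∀ (i : ℕ) p' l', (pargs ++ ps')[i]? = some p' →
                  (lsA ++ ls')[i]? = some l' → PMatch h σ p' l' := by
                intro i p' l' hip hil
                by_cases hi : i < pargs.length
                · rw [List.getElem?_append_left hi] at hip
                  rw [List.getElem?_append_left (by omega)] at hil
                  exact hmA i p' l' hip hil
                · rw [List.getElem?_append_right (by omega)] at hip
                  rw [List.getElem?_append_right (by omega)] at hil
                  rw [show i - lsA.length = i - pargs.length by omega] at hil
                  exact hm1' _ p' l' hip hil
              have hmB' : ∀ (i : ℕ) q' l', (qargs ++ qs')[i]? = some q' →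
                  (lsA ++ ls')[i]? = some l' → PMatch h τ q' l' := by
                intro i q' l' hiq hil
                by_cases hi : i < qargs.length
                · rw [List.getElem?_append_left hi] at hiq
                  rw [List.getElem?_append_left (by omega)] at hil
                  exact hmB i q' l' hiq hil
                · rw [List.getElem?_append_right (by omega)] at hiq
                  rw [List.getElem?_append_right (by omega)] at hil
                  rw [show i - lsA.length = i - qargs.length by omega] at hil
                  exact hm2' _ q' l' hiq hil
              obtain ⟨s1, s2, hs⟩ := ih (pargs ++ ps') (qargs ++ qs') (lsA ++ ls') σ τ
                hszA hlinA hlinB hlenA' hlenB' hmA' hmB'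
              rw [List.map_append, List.map_append] at hs
              obtain ⟨hs1, hs2⟩ := List.append_inj hs (by simp; omega)
              refine ⟨s1, s2, ?_⟩
              simp only [List.map_cons, subst_con]
              rw [hs1, hs2]

end Memo
namespace Memo
variable {Op Con V : Type}

/-- Redex shapes. -/
def Rdx (e : Expr Op Con) : Prop :=
  (∃ (f : Op) (ls : List Loc), e = .op f (ls.map Expr.loc)) ∨
  (∃ (cc : Con) (ls : List Loc), e = .con cc (ls.map Expr.loc)) ∨
  (∃ (f : Op) (ls : List Loc) (l : Loc), e = .marked f ls (.loc l))

lemma rdx_ne_loc {r : Expr Op Con} (hr : Rdx r) (l : Loc) : r ≠ .loc l := by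
  rcases hr with ⟨f, ls, rfl⟩ | ⟨cc, ls, rfl⟩ | ⟨f, ls, l', rfl⟩ <;> simp

lemma plug_ne_loc {E : Ctx Op Con} {r : Expr Op Con} (hr : Rdx r) (l : Loc) :
    E.plug r ≠ .loc l := by
  cases E with
  | hole => exact rdx_ne_loc hr l
  | marked f ls E' => simp [Ctx.plug]
  | op f ls E' es => simp [Ctx.plug]
  | con cc ls E' es => simp [Ctx.plug]

lemma loc_prefix_split : ∀ (ls1 ls2 : List Loc) (x y : Expr Op Con) (r1 r2 : List (Expr Op Con)),
    (∀ l, x ≠ .loc l) → (∀ l, y ≠ .loc l) →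
    ls1.map Expr.loc ++ x :: r1 = ls2.map Expr.loc ++ y :: r2 →
    ls1 = ls2 ∧ x = y ∧ r1 = r2 := by
  intro ls1
  induction ls1 with
  | nil =>
    intro ls2 x y r1 r2 hx hy h
    cases ls2 with
    | nil => simp at h; exact ⟨rfl, h.1, h.2⟩
    | cons a t => simp at h; exact absurd h.1 (hx a)
  | cons a t ih =>
    intro ls2 x y r1 r2 hx hy h
    cases ls2 with
    | nil => simp at h; exact absurd h.1.symm (hy a)
    | cons b t2 =>
      simp only [List.map_cons, List.cons_append] at h
      injection h with h1 h2
      injection h1 with h1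
      obtain ⟨e1, e2, e3⟩ := ih t2 x y r1 r2 hx hy h2
      exact ⟨by rw [h1, e1], e2, e3⟩

lemma plug_unique : ∀ (E1 E2 : Ctx Op Con) (a b : Expr Op Con), Rdx a → Rdx b →
    E1.plug a = E2.plug b → E1 = E2 ∧ a = b := by
  intro E1
  induction E1 with
  | hole =>
    intro E2 a b ha hb h
    cases E2 with
    | hole => exact ⟨rfl, h⟩
    | marked f ls E' =>
      simp only [Ctx.plug] at h
      rcases ha with ⟨f', ls', he⟩ | ⟨cc, ls', he⟩ | ⟨f', ls', l, he⟩ <;> rw [he] at h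
      · exact absurd h (by simp)
      · exact absurd h (by simp)
      · injection h with e1 e2 e3
        exact absurd e3.symm (plug_ne_loc hb l)
    | op f ls E' es =>
      simp only [Ctx.plug] at h
      rcases ha with ⟨f', ls', he⟩ | ⟨cc, ls', he⟩ | ⟨f', ls', l, he⟩ <;> rw [he] at h
      · injection h with e1 e2
        have hmem : E'.plug b ∈ ls'.map Expr.loc := by
          rw [e2]; exact List.mem_append_right _ (List.mem_cons_self)
        obtain ⟨l, _, hl⟩ := List.mem_map.mp hmem
        exact absurd hl.symm (plug_ne_loc hb l)
      · exact absurd h (by simp)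
      · exact absurd h (by simp)
    | con cc ls E' es =>
      simp only [Ctx.plug] at h
      rcases ha with ⟨f', ls', he⟩ | ⟨cc', ls', he⟩ | ⟨f', ls', l, he⟩ <;> rw [he] at h
      · exact absurd h (by simp)
      · injection h with e1 e2
        have hmem : E'.plug b ∈ ls'.map Expr.loc := by
          rw [e2]; exact List.mem_append_right _ (List.mem_cons_self)
        obtain ⟨l, _, hl⟩ := List.mem_map.mp hmem
        exact absurd hl.symm (plug_ne_loc hb l)
      · exact absurd h (by simp)
  | marked f ls E ih =>
    intro E2 a b ha hb h
    cases E2 with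
    | hole =>
      simp only [Ctx.plug] at h
      rcases hb with ⟨f', ls', he⟩ | ⟨cc, ls', he⟩ | ⟨f', ls', l, he⟩ <;> rw [he] at h
      · exact absurd h (by simp)
      · exact absurd h (by simp)
      · injection h with e1 e2 e3
        exact absurd e3 (plug_ne_loc ha l)
    | marked f' ls' E' =>
      simp only [Ctx.plug] at h
      injection h with e1 e2 e3
      obtain ⟨he, hab⟩ := ih E' a b ha hb e3
      exact ⟨by rw [e1, e2, he], hab⟩
    | op f' ls' E' es => exact absurd h (by simp [Ctx.plug])
    | con cc ls' E' es => exact absurd h (by simp [Ctx.plug])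
  | op f ls E es ih =>
    intro E2 a b ha hb h
    cases E2 with
    | hole =>
      simp only [Ctx.plug] at h
      rcases hb with ⟨f', ls', he⟩ | ⟨cc, ls', he⟩ | ⟨f', ls', l, he⟩ <;> rw [he] at h
      · injection h with e1 e2
        have hmem : E.plug a ∈ ls'.map Expr.loc := by
          rw [← e2]; exact List.mem_append_right _ (List.mem_cons_self)
        obtain ⟨l, _, hl⟩ := List.mem_map.mp hmem
        exact absurd hl.symm (plug_ne_loc ha l)
      · exact absurd h (by simp)
      · exact absurd h (by simp)
    | marked f' ls' E' => exact absurd h (by simp [Ctx.plug])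
    | op f' ls' E' es' =>
      simp only [Ctx.plug] at h
      injection h with e1 e2
      obtain ⟨g1, g2, g3⟩ := loc_prefix_split ls ls' _ _ es es'
        (fun l => plug_ne_loc ha l) (fun l => plug_ne_loc hb l) e2
      obtain ⟨he, hab⟩ := ih E' a b ha hb g2
      exact ⟨by rw [e1, g1, he, g3], hab⟩
    | con cc ls' E' es' => exact absurd h (by simp [Ctx.plug])
  | con cc ls E es ih =>
    intro E2 a b ha hb h
    cases E2 with
    | hole =>
      simp only [Ctx.plug] at h
      rcases hb with ⟨f', ls', he⟩ | ⟨cc', ls', he⟩ | ⟨f', ls', l, he⟩ <;> rw [he] at h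
      · exact absurd h (by simp)
      · injection h with e1 e2
        have hmem : E.plug a ∈ ls'.map Expr.loc := by
          rw [← e2]; exact List.mem_append_right _ (List.mem_cons_self)
        obtain ⟨l, _, hl⟩ := List.mem_map.mp hmem
        exact absurd hl.symm (plug_ne_loc ha l)
      · exact absurd h (by simp)
    | marked f' ls' E' => exact absurd h (by simp [Ctx.plug])
    | op f' ls' E' es' => exact absurd h (by simp [Ctx.plug])
    | con cc' ls' E' es' =>
      simp only [Ctx.plug] at h
      injection h with e1 e2
      obtain ⟨g1, g2, g3⟩ := loc_prefix_split ls ls' _ _ es es'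
        (fun l => plug_ne_loc ha l) (fun l => plug_ne_loc hb l) e2
      obtain ⟨he, hab⟩ := ih E' a b ha hb g2
      exact ⟨by rw [e1, g1, he, g3], hab⟩

lemma merge_det {h : Heap Con} (hms : MaxShared h) {cc : Con} {ls : List Loc}
    {h1 h2 : Heap Con} {l1 l2 : Loc} (m1 : Merge h cc ls h1 l1) (m2 : Merge h cc ls h2 l2) :
    h1 = h2 ∧ l1 = l2 := by
  cases m1 with
  | reuse hr1 =>
    cases m2 with
    | reuse hr2 => exact ⟨rfl, hms _ _ _ _ hr1 hr2⟩
    | fresh hn2 _ _ => exact absurd hr1 (hn2 l1)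
  | fresh hn1 he1 hmin1 =>
    cases m2 with
    | reuse hr2 => exact absurd hr2 (hn1 l2)
    | fresh hn2 he2 hmin2 =>
      have : l1 = l2 := by
        rcases lt_trichotomy l1 l2 with hlt | heq | hgt
        · exact absurd he1 (hmin2 l1 hlt)
        · exact heq
        · exact absurd he2 (hmin1 l2 hgt)
      subst this
      exact ⟨rfl, rfl⟩

lemma loc_map_inj {ls1 ls2 : List Loc} (h : ls1.map (Expr.loc (Op := Op) (Con := Con)) = ls2.map Expr.loc) :
    ls1 = ls2 := by
  have : Function.Injective (Expr.loc (Op := Op) (Con := Con)) := by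
    intro a b hab; injection hab
  exact List.map_injective_iff.mpr this h

end Memo
namespace Memo
variable {Op Con V : Type}

lemma apply_det [DecidableEq V] {P : Prog Op Con V} (hP : Orthogonal P) {h : Heap Con}
    {f : Op} {ls : List Loc} {r1 r2 : Rule Op Con V} {σ1 σ2 : V → Loc}
    (hr1 : r1 ∈ P.rules) (ho1 : r1.lhsOp = f) (hl1 : r1.lhsArgs.length = ls.length)
    (hmt1 : ∀ (i : ℕ) p l, r1.lhsArgs[i]? = some p → ls[i]? = some l → PMatch h σ1 p l)
    (hr2 : r2 ∈ P.rules) (ho2 : r2.lhsOp = f) (hl2 : r2.lhsArgs.length = ls.length)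
    (hmt2 : ∀ (i : ℕ) p l, r2.lhsArgs[i]? = some p → ls[i]? = some l → PMatch h σ2 p l) :
    instE σ1 r1.rhs = instE σ2 r2.rhs := by
  obtain ⟨hwfl, hna⟩ := hP
  have lin1 := (hwfl r1 hr1).2
  have lin2 := (hwfl r2 hr2).2
  obtain ⟨s1, s2, hs⟩ := joinList (sizeOf r1.lhsArgs + sizeOf r2.lhsArgs)
    r1.lhsArgs r2.lhsArgs ls σ1 σ2 le_rfl lin1 lin2 hl1 hl2 hmt1 hmt2
  have hrr : r1 = r2 := hna r1 hr1 r2 hr2 (ho1.trans ho2.symm) s1 s2 hs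
  subst hrr
  apply instE_congr (sizeOf r1.rhs) _ le_rfl
  intro x hx
  obtain ⟨p, hp, hxp⟩ := (hwfl r1 hr1).1.2 x hx
  obtain ⟨i, hilt, rfl⟩ := List.mem_iff_getElem.mp hp
  have hi : r1.lhsArgs[i]? = some r1.lhsArgs[i] := List.getElem?_eq_getElem hilt
  have hil : i < ls.length := by omega
  have hll : ls[i]? = some ls[i] := List.getElem?_eq_getElem hil
  exact pmatch_var_det (sizeOf r1.lhsArgs[i]) _ le_rfl _
    (hmt1 i _ _ hi hll) (hmt2 i _ _ hi hll) x hxp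

end Memo
namespace Memo
variable {Op Con V : Type}

lemma applyStep_inv {P : Prog Op Con V} {C : HCache Op} {h : Heap Con} {e : Expr Op Con}
    {c2 : Config Op Con} (st : ApplyStep P (C, h, e) c2) :
    ∃ (E : Ctx Op Con) (f : Op) (ls : List Loc) (r : Rule Op Con V) (σ : V → Loc),
      (∀ l, (f, ls, l) ∉ C) ∧ r ∈ P.rules ∧ r.lhsOp = f ∧
      r.lhsArgs.length = ls.length ∧
      (∀ (i : ℕ) p l, r.lhsArgs[i]? = some p → ls[i]? = some l → PMatch h σ p l) ∧
      e = Ctx.plug E (.op f (ls.map Expr.loc)) ∧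
      c2 = (C, h, Ctx.plug E (.marked f ls (instE σ r.rhs))) := by
  cases st with
  | mk hnc hr ho hlen hmt => exact ⟨_, _, _, _, _, hnc, hr, ho, hlen, hmt, rfl, rfl⟩

lemma readStep_inv {C : HCache Op} {h : Heap Con} {e : Expr Op Con}
    {c2 : Config Op Con} (st : ReadStep (C, h, e) c2) :
    ∃ (E : Ctx Op Con) (f : Op) (ls : List Loc) (l : Loc),
      (f, ls, l) ∈ C ∧ e = Ctx.plug E (.op f (ls.map Expr.loc)) ∧
      c2 = (C, h, Ctx.plug E (.loc l)) := by
  cases st with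
  | mk hc => exact ⟨_, _, _, _, hc, rfl, rfl⟩

lemma storeStep_inv {C : HCache Op} {h : Heap Con} {e : Expr Op Con}
    {c2 : Config Op Con} (st : StoreStep (C, h, e) c2) :
    ∃ (E : Ctx Op Con) (f : Op) (ls : List Loc) (l : Loc),
      e = Ctx.plug E (.marked f ls (.loc l)) ∧
      c2 = (insert (f, ls, l) C, h, Ctx.plug E (.loc l)) := by
  cases st with
  | mk => exact ⟨_, _, _, _, rfl, rfl⟩

lemma mergeStep_inv {C : HCache Op} {h : Heap Con} {e : Expr Op Con}
    {c2 : Config Op Con} (st : MergeStep (C, h, e) c2) :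
    ∃ (E : Ctx Op Con) (cc : Con) (ls : List Loc) (h' : Heap Con) (l : Loc),
      Merge h cc ls h' l ∧ e = Ctx.plug E (.con cc (ls.map Expr.loc)) ∧
      c2 = (C, h', Ctx.plug E (.loc l)) := by
  cases st with
  | mk hm => exact ⟨_, _, _, _, _, hm, rfl, rfl⟩


end Memo

namespace Memo

/-- Lemma 11.(2).  The combined small-step relation
`⇒ = ⇀ ∪ →read ∪ →store ∪ →merge` is deterministic on well-formed configurations. -/
theorem statement10 {Op Con V : Type} [DecidableEq V] (P : Prog Op Con V)
    (hP : Orthogonal P) (c c1 c2 : Config Op Con) (hwf : WF c)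
    (h1 : Step P c c1) (h2 : Step P c c2) :
    c1 = c2 := by
  obtain ⟨C, hh, e⟩ := c
  obtain ⟨hms, hcl, hcf, hnomark, hcd, hed⟩ := hwf
  rcases h1 with ha1 | hr1 | hs1 | hm1
  · obtain ⟨E1, f1, ls1, r1, σ1, hnc1, hrr1, ho1, hlen1, hmt1, he1, rfl⟩ := applyStep_inv ha1
    rcases h2 with ha2 | hr2 | hs2 | hm2
    · -- apply / apply
      obtain ⟨E2, f2, ls2, r2, σ2, hnc2, hrr2, ho2, hlen2, hmt2, he2, rfl⟩ := applyStep_inv ha2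
      obtain ⟨hEE, hred⟩ := plug_unique E1 E2 _ _
        (Or.inl ⟨f1, ls1, rfl⟩) (Or.inl ⟨f2, ls2, rfl⟩) (he1.symm.trans he2)
      injection hred with ef els
      obtain rfl : ls1 = ls2 := loc_map_inj els
      subst ef; subst hEE
      rw [apply_det hP hrr1 ho1 hlen1 hmt1 hrr2 ho2 hlen2 hmt2]
    · -- apply / read
      obtain ⟨E2, f2, ls2, l, hc2, he2, rfl⟩ := readStep_inv hr2
      obtain ⟨hEE, hred⟩ := plug_unique E1 E2 _ _
        (Or.inl ⟨f1, ls1, rfl⟩) (Or.inl ⟨f2, ls2, rfl⟩) (he1.symm.trans he2)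
      injection hred with ef els
      obtain rfl : ls1 = ls2 := loc_map_inj els
      subst ef
      exact absurd hc2 (hnc1 l)
    · -- apply / store
      obtain ⟨E2, f2, ls2, l, he2, rfl⟩ := storeStep_inv hs2
      obtain ⟨hEE, hred⟩ := plug_unique E1 E2 _ _
        (Or.inl ⟨f1, ls1, rfl⟩) (Or.inr (Or.inr ⟨f2, ls2, l, rfl⟩)) (he1.symm.trans he2)
      exact absurd hred (by simp)
    · -- apply / merge
      obtain ⟨E2, cc, ls2, h', l, hmg, he2, rfl⟩ := mergeStep_inv hm2
      obtain ⟨hEE, hred⟩ := plug_unique E1 E2 _ _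
        (Or.inl ⟨f1, ls1, rfl⟩) (Or.inr (Or.inl ⟨cc, ls2, rfl⟩)) (he1.symm.trans he2)
      exact absurd hred (by simp)
  · obtain ⟨E1, f1, ls1, l1, hc1, he1, rfl⟩ := readStep_inv hr1
    rcases h2 with ha2 | hr2 | hs2 | hm2
    · -- read / apply
      obtain ⟨E2, f2, ls2, r2, σ2, hnc2, hrr2, ho2, hlen2, hmt2, he2, rfl⟩ := applyStep_inv ha2
      obtain ⟨hEE, hred⟩ := plug_unique E1 E2 _ _
        (Or.inl ⟨f1, ls1, rfl⟩) (Or.inl ⟨f2, ls2, rfl⟩) (he1.symm.trans he2)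
      injection hred with ef els
      obtain rfl : ls1 = ls2 := loc_map_inj els
      subst ef
      exact absurd hc1 (hnc2 l1)
    · -- read / read
      obtain ⟨E2, f2, ls2, l2, hc2, he2, rfl⟩ := readStep_inv hr2
      obtain ⟨hEE, hred⟩ := plug_unique E1 E2 _ _
        (Or.inl ⟨f1, ls1, rfl⟩) (Or.inl ⟨f2, ls2, rfl⟩) (he1.symm.trans he2)
      injection hred with ef els
      obtain rfl : ls1 = ls2 := loc_map_inj els
      subst ef; subst hEE
      rw [hcf f1 ls1 l1 l2 hc1 hc2]
    · -- read / store
      obtain ⟨E2, f2, ls2, l, he2, rfl⟩ := storeStep_inv hs2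
      obtain ⟨hEE, hred⟩ := plug_unique E1 E2 _ _
        (Or.inl ⟨f1, ls1, rfl⟩) (Or.inr (Or.inr ⟨f2, ls2, l, rfl⟩)) (he1.symm.trans he2)
      exact absurd hred (by simp)
    · -- read / merge
      obtain ⟨E2, cc, ls2, h', l, hmg, he2, rfl⟩ := mergeStep_inv hm2
      obtain ⟨hEE, hred⟩ := plug_unique E1 E2 _ _
        (Or.inl ⟨f1, ls1, rfl⟩) (Or.inr (Or.inl ⟨cc, ls2, rfl⟩)) (he1.symm.trans he2)
      exact absurd hred (by simp)
  · obtain ⟨E1, f1, ls1, l1, he1, rfl⟩ := storeStep_inv hs1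
    rcases h2 with ha2 | hr2 | hs2 | hm2
    · obtain ⟨E2, f2, ls2, r2, σ2, hnc2, hrr2, ho2, hlen2, hmt2, he2, rfl⟩ := applyStep_inv ha2
      obtain ⟨hEE, hred⟩ := plug_unique E1 E2 _ _
        (Or.inr (Or.inr ⟨f1, ls1, l1, rfl⟩)) (Or.inl ⟨f2, ls2, rfl⟩) (he1.symm.trans he2)
      exact absurd hred (by simp)
    · obtain ⟨E2, f2, ls2, l2, hc2, he2, rfl⟩ := readStep_inv hr2
      obtain ⟨hEE, hred⟩ := plug_unique E1 E2 _ _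
        (Or.inr (Or.inr ⟨f1, ls1, l1, rfl⟩)) (Or.inl ⟨f2, ls2, rfl⟩) (he1.symm.trans he2)
      exact absurd hred (by simp)
    · -- store / store
      obtain ⟨E2, f2, ls2, l2, he2, rfl⟩ := storeStep_inv hs2
      obtain ⟨hEE, hred⟩ := plug_unique E1 E2 _ _
        (Or.inr (Or.inr ⟨f1, ls1, l1, rfl⟩)) (Or.inr (Or.inr ⟨f2, ls2, l2, rfl⟩))
        (he1.symm.trans he2)
      injection hred with ef els el
      injection el with el
      subst ef; subst els; subst el; subst hEE; rfl
    · obtain ⟨E2, cc, ls2, h', l, hmg, he2, rfl⟩ := mergeStep_inv hm2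
      obtain ⟨hEE, hred⟩ := plug_unique E1 E2 _ _
        (Or.inr (Or.inr ⟨f1, ls1, l1, rfl⟩)) (Or.inr (Or.inl ⟨cc, ls2, rfl⟩))
        (he1.symm.trans he2)
      exact absurd hred (by simp)
  · obtain ⟨E1, cc1, ls1, h1', l1, hmg1, he1, rfl⟩ := mergeStep_inv hm1
    rcases h2 with ha2 | hr2 | hs2 | hm2
    · obtain ⟨E2, f2, ls2, r2, σ2, hnc2, hrr2, ho2, hlen2, hmt2, he2, rfl⟩ := applyStep_inv ha2
      obtain ⟨hEE, hred⟩ := plug_unique E1 E2 _ _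
        (Or.inr (Or.inl ⟨cc1, ls1, rfl⟩)) (Or.inl ⟨f2, ls2, rfl⟩) (he1.symm.trans he2)
      exact absurd hred (by simp)
    · obtain ⟨E2, f2, ls2, l2, hc2, he2, rfl⟩ := readStep_inv hr2
      obtain ⟨hEE, hred⟩ := plug_unique E1 E2 _ _
        (Or.inr (Or.inl ⟨cc1, ls1, rfl⟩)) (Or.inl ⟨f2, ls2, rfl⟩) (he1.symm.trans he2)
      exact absurd hred (by simp)
    · obtain ⟨E2, f2, ls2, l2, he2, rfl⟩ := storeStep_inv hs2
      obtain ⟨hEE, hred⟩ := plug_unique E1 E2 _ _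
        (Or.inr (Or.inl ⟨cc1, ls1, rfl⟩)) (Or.inr (Or.inr ⟨f2, ls2, l2, rfl⟩))
        (he1.symm.trans he2)
      exact absurd hred (by simp)
    · -- merge / merge
      obtain ⟨E2, cc2, ls2, h2', l2, hmg2, he2, rfl⟩ := mergeStep_inv hm2
      obtain ⟨hEE, hred⟩ := plug_unique E1 E2 _ _
        (Or.inr (Or.inl ⟨cc1, ls1, rfl⟩)) (Or.inr (Or.inl ⟨cc2, ls2, rfl⟩))
        (he1.symm.trans he2)
      injection hred with ec els
      obtain rfl : ls1 = ls2 := loc_map_inj els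
      subst ec; subst hEE
      obtain ⟨hh', hl'⟩ := merge_det hms hmg1 hmg2
      rw [hh', hl']


end Memo
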